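/- With A = H_M† H_M ≻ 0 and P > 0, setting Z* = (tr(A^{-1/2})/P)·A^{1/2}, any Hermitian Z ≻ 0 with tr(Z⁻¹) ≤ P satisfies tr(A⁻¹ Z) ≥ tr(A⁻¹ Z*) = tr(A^{-1/2})²/P (lower bound part of the unconstrained-secrecy filter design). -/

import Mathlib

open Matrix
open scoped ComplexOrder

noncomputable def Matrix.PosSemidef.sqrt {n : Type*} {𝕜 : Type*} [Fintype n] [RCLike 𝕜]
    [DecidableEq n] {A : Matrix n n 𝕜} (hA : A.PosSemidef) : Matrix n n 𝕜 :=
  hA.1.eigenvectorUnitary.1 * diagonal ((↑) ∘ (√·) ∘ hA.1.eigenvalues) *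
    (star hA.1.eigenvectorUnitary : Matrix n n 𝕜)

lemma psd_sqrt_isHermitian {m : ℕ} {A : Matrix (Fin m) (Fin m) ℂ} (hA : A.PosSemidef) :
    hA.sqrt.IsHermitian := by
  unfold Matrix.PosSemidef.sqrt
  rw [IsHermitian, conjTranspose_mul, conjTranspose_mul, diagonal_conjTranspose, mul_assoc]
  congr 2
  · ext i; simp
  · simp

lemma psd_sqrt_mul_self {m : ℕ} {A : Matrix (Fin m) (Fin m) ℂ} (hA : A.PosSemidef) :
    hA.sqrt * hA.sqrt = A := by
  unfold Matrix.PosSemidef.sqrt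
  conv_rhs => rw [hA.1.spectral_theorem, Unitary.conjStarAlgAut_apply]
  have hU : (star hA.1.eigenvectorUnitary : Matrix (Fin m) (Fin m) ℂ) * hA.1.eigenvectorUnitary.1 = 1 :=
    Unitary.coe_star_mul_self _
  calc _ = hA.1.eigenvectorUnitary.1 * (diagonal ((↑) ∘ (√·) ∘ hA.1.eigenvalues) *
      ((star hA.1.eigenvectorUnitary : Matrix (Fin m) (Fin m) ℂ) * hA.1.eigenvectorUnitary.1) *
      diagonal ((↑) ∘ (√·) ∘ hA.1.eigenvalues)) * (star hA.1.eigenvectorUnitary : Matrix (Fin m) (Fin m) ℂ) := by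
        simp only [Matrix.mul_assoc]; rfl
    _ = _ := by
        rw [hU, Matrix.mul_one, diagonal_mul_diagonal]
        congr 3
        ext i
        simp only [Function.comp_apply]
        rw [← Complex.ofReal_mul, Real.mul_self_sqrt (hA.eigenvalues_nonneg i)]
        rfl

lemma trace_cs {m : ℕ} (X Y : Matrix (Fin m) (Fin m) ℂ) :
    ((Xᴴ * Y).trace.re) ^ 2 ≤ (Xᴴ * X).trace.re * (Yᴴ * Y).trace.re := by
  let f : Matrix (Fin m) (Fin m) ℂ → EuclideanSpace ℂ (Fin m × Fin m) := fun U => WithLp.toLp 2 (fun p => U p.1 p.2)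
  have key : ∀ U V : Matrix (Fin m) (Fin m) ℂ, (Uᴴ * V).trace = inner ℂ (f U) (f V) := by
    intro U V
    simp only [Matrix.trace, Matrix.diag, Matrix.mul_apply, PiLp.inner_apply, RCLike.inner_apply,
      Fintype.sum_prod_type, conjTranspose_apply, f, RCLike.star_def]
    rw [Finset.sum_comm]
    simp only [mul_comm]
  rw [key, key, key]
  have e1 : ((inner ℂ (f X) (f X) : ℂ)).re = ‖f X‖ ^ 2 := by
    rw [← RCLike.re_to_complex]; exact inner_self_eq_norm_sq (f X)
  have e2 : ((inner ℂ (f Y) (f Y) : ℂ)).re = ‖f Y‖ ^ 2 := by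
    rw [← RCLike.re_to_complex]; exact inner_self_eq_norm_sq (f Y)
  rw [e1, e2]
  calc ((inner ℂ (f X) (f Y) : ℂ)).re ^ 2 ≤ ‖(inner ℂ (f X) (f Y) : ℂ)‖ ^ 2 := by
        have := Complex.abs_re_le_norm (inner ℂ (f X) (f Y) : ℂ)
        rw [← _root_.sq_abs ((inner ℂ (f X) (f Y) : ℂ)).re]
        exact pow_le_pow_left₀ (abs_nonneg _) this 2
      _ ≤ (‖f X‖ * ‖f Y‖) ^ 2 :=
        pow_le_pow_left₀ (norm_nonneg _) (norm_inner_le_norm (f X) (f Y)) 2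
      _ = ‖f X‖ ^ 2 * ‖f Y‖ ^ 2 := by ring

lemma trace_sq_re_nonneg {m : ℕ} (X : Matrix (Fin m) (Fin m) ℂ) :
    0 ≤ (Xᴴ * X).trace.re := by
  have h : (Xᴴ * X).trace = ∑ i, ∑ j, (starRingEnd ℂ) (X j i) * X j i := by
    simp [Matrix.trace, Matrix.diag, Matrix.mul_apply, conjTranspose_apply]
  rw [h, Complex.re_sum]
  refine Finset.sum_nonneg fun i _ => ?_
  rw [Complex.re_sum]
  refine Finset.sum_nonneg fun j _ => ?_
  rw [mul_comm, Complex.mul_conj]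
  simp [Complex.normSq_nonneg]

/-- Lower bound part of the unconstrained-secrecy filter design: with `A = H_Mᴴ H_M ≻ 0`,
`P > 0` and `Z* = (tr(A^{-1/2})/P) A^{1/2}`, every positive definite Hermitian `Z` with
`tr(Z⁻¹) ≤ P` satisfies `tr(A⁻¹ Z) ≥ tr(A⁻¹ Z*) = tr(A^{-1/2})²/P`. -/
theorem power_only_lower_bound {m : ℕ} (A : Matrix (Fin m) (Fin m) ℂ) (hA : A.PosDef)
    (P : ℝ) (hP : 0 < P)
    (Z : Matrix (Fin m) (Fin m) ℂ) (hZ : Z.PosDef) (hpow : (Z⁻¹.trace).re ≤ P) :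
    ((A⁻¹ * Z).trace).re ≥
        ((A⁻¹ * ((hA.posSemidef.sqrt⁻¹.trace / (P : ℂ)) • hA.posSemidef.sqrt)).trace).re ∧
      (A⁻¹ * ((hA.posSemidef.sqrt⁻¹.trace / (P : ℂ)) • hA.posSemidef.sqrt)).trace =
        hA.posSemidef.sqrt⁻¹.trace ^ 2 / (P : ℂ) := by
  set S := hA.posSemidef.sqrt with hSdef
  have hSherm : S.IsHermitian := psd_sqrt_isHermitian hA.posSemidef
  have hSS : S * S = A := psd_sqrt_mul_self hA.posSemidef
  have hSdet : IsUnit S.det := by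
    have : S.det * S.det = A.det := by rw [← det_mul, hSS]
    have hAdet : A.det ≠ 0 := ne_of_gt hA.det_pos
    have : S.det ≠ 0 := by intro h; rw [h, mul_zero] at this; exact hAdet this.symm
    exact isUnit_iff_ne_zero.mpr this
  have hAinv : A⁻¹ = S⁻¹ * S⁻¹ := by rw [← hSS, Matrix.mul_inv_rev]
  have hAinvS : A⁻¹ * S = S⁻¹ := by
    rw [hAinv, mul_assoc, Matrix.nonsing_inv_mul S hSdet, mul_one]
  -- trace of S⁻¹ is real
  have hBherm : (S⁻¹).IsHermitian := hSherm.inv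
  have htrB : S⁻¹.trace = ((S⁻¹.trace.re : ℝ) : ℂ) := by
    have : star S⁻¹.trace = S⁻¹.trace := by
      rw [← Matrix.trace_conjTranspose, hBherm.eq]
    exact (Complex.conj_eq_iff_re.mp this).symm
  set r : ℝ := S⁻¹.trace.re with hr
  -- the equality part
  have heq : (A⁻¹ * ((S⁻¹.trace / (P : ℂ)) • S)).trace = S⁻¹.trace ^ 2 / (P : ℂ) := by
    rw [Matrix.mul_smul, Matrix.trace_smul, hAinvS, smul_eq_mul]
    ring
  refine ⟨?_, heq⟩
  -- Cauchy–Schwarz with X = W⁻¹, Y = W * S⁻¹, W = sqrt Z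
  set W := hZ.posSemidef.sqrt with hWdef
  have hWherm : W.IsHermitian := psd_sqrt_isHermitian hZ.posSemidef
  have hWW : W * W = Z := psd_sqrt_mul_self hZ.posSemidef
  have hWdet : IsUnit W.det := by
    have : W.det * W.det = Z.det := by rw [← det_mul, hWW]
    have hZdet : Z.det ≠ 0 := ne_of_gt hZ.det_pos
    have : W.det ≠ 0 := by intro h; rw [h, mul_zero] at this; exact hZdet this.symm
    exact isUnit_iff_ne_zero.mpr this
  have hXY : (W⁻¹)ᴴ * (W * S⁻¹) = S⁻¹ := by
    rw [hWherm.inv.eq, ← mul_assoc, Matrix.nonsing_inv_mul W hWdet, one_mul]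
  have hXX : (W⁻¹)ᴴ * W⁻¹ = Z⁻¹ := by
    rw [hWherm.inv.eq, ← Matrix.mul_inv_rev, hWW]
  have hYY : ((W * S⁻¹)ᴴ * (W * S⁻¹)).trace = (A⁻¹ * Z).trace := by
    rw [conjTranspose_mul, hBherm.eq, hWherm.eq, mul_assoc, ← mul_assoc W W, hWW]
    rw [← mul_assoc, Matrix.trace_mul_comm, ← mul_assoc, hAinv]
  have hcs := trace_cs (W⁻¹) (W * S⁻¹)
  rw [hXY, hXX, hYY] at hcs
  have ht : 0 ≤ ((A⁻¹ * Z).trace).re := by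
    rw [← hYY]; exact trace_sq_re_nonneg _
  have hq : 0 ≤ (Z⁻¹.trace).re := by rw [← hXX]; exact trace_sq_re_nonneg _
  -- now r^2 ≤ P * t
  have hPt : r ^ 2 ≤ P * ((A⁻¹ * Z).trace).re := by
    calc r ^ 2 ≤ (Z⁻¹.trace).re * ((A⁻¹ * Z).trace).re := hcs
      _ ≤ P * ((A⁻¹ * Z).trace).re := by
          exact mul_le_mul_of_nonneg_right hpow ht
  -- compute re of RHS
  have hre : ((A⁻¹ * ((S⁻¹.trace / (P : ℂ)) • S)).trace).re = r ^ 2 / P := by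
    rw [heq, htrB]
    push_cast
    rw [← Complex.ofReal_pow, ← Complex.ofReal_div, Complex.ofReal_re]
  rw [ge_iff_le, hre, div_le_iff₀ hP, mul_comm]
  exact hPt
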